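/- For each n ≥ 1 and every real t at which all functions involved are defined (t not a pole of R_{n−1}, R_n, R_{n+1}, s_n, or of s_n shifted by 1), there holds the identity (2n+1)^2(2n+2)^2 p(n) R_{n+1}(t) − q(n) R_n(t) − (2n−1)^2(2n)^2 p(n+1) R_{n−1}(t) = −S_n(t+1) − S_n(t), where S_n(t) = s_n(t) R_n(t). -/

import Mathlib

open Filter Topology

noncomputable section

/-- The rational function
`R_n(t) = n!(2t+n+1)·[t(t-1)⋯(t-n+1)·(t+n+1)⋯(t+2n)] / ((t+1/2)(t+3/2)⋯(t+n+1/2))³`. -/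
def R (n : ℕ) (t : ℝ) : ℝ :=
  (Nat.factorial n : ℝ) * (2*t + n + 1) *
    ((∏ i ∈ Finset.range n, (t - i)) * ∏ i ∈ Finset.range n, (t + n + 1 + i)) /
    (∏ k ∈ Finset.range (n+1), (t + k + 1/2))^3

/-- `A_{jk}(n) = (1/j!)·(d/dt)^j (R_n(t)(t+k+1/2)³) |_{t = -k-1/2}`. -/
def A (n j k : ℕ) : ℝ :=
  (1 / (Nat.factorial j : ℝ)) *
    iteratedDeriv j (fun t : ℝ => R n t * (t + k + 1/2)^3) (-(k : ℝ) - 1/2)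

/-- `F_n = Σ_{t≥0} (-1)^t R_n(t)`. -/
def F (n : ℕ) : ℝ := ∑' t : ℕ, (-1)^t * R n t

/-- `U_n = 2³ Σ_{k=0}^n (-1)^k A_{0k}(n)`. -/
def U (n : ℕ) : ℝ := 2^3 * ∑ k ∈ Finset.range (n+1), (-1)^k * A n 0 k

/-- `U_n' = 2² Σ_{k=0}^n (-1)^k A_{1k}(n)`. -/
def U' (n : ℕ) : ℝ := 2^2 * ∑ k ∈ Finset.range (n+1), (-1)^k * A n 1 k

/-- `U_n'' = 2 Σ_{k=0}^n (-1)^k A_{2k}(n)`. -/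
def U'' (n : ℕ) : ℝ := 2 * ∑ k ∈ Finset.range (n+1), (-1)^k * A n 2 k

/-- `V_n = Σ_{j=0}^2 2^{3-j} Σ_{k=0}^n (-1)^k A_{jk}(n) Σ_{l=0}^{k-1} (-1)^l/(2l+1)^{3-j}`. -/
def V (n : ℕ) : ℝ :=
  ∑ j ∈ Finset.range 3, 2^(3-j) *
    ∑ k ∈ Finset.range (n+1), (-1)^k * A n j k *
      ∑ l ∈ Finset.range k, (-1)^l / (2*(l : ℝ)+1)^(3-j)

/-- Dirichlet's beta function `β(s) = Σ_{l≥0} (-1)^l/(2l+1)^s`, defined as the limit of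
the partial sums (the series converges only conditionally for `s = 1`). -/
def beta (s : ℕ) : ℝ :=
  limUnder atTop (fun N : ℕ => ∑ l ∈ Finset.range N, (-1)^l / (2*(l : ℝ)+1)^s)

/-- `D n = lcm(1, 2, …, n)` (equal to `1` for `n = 0`). -/
def D (n : ℕ) : ℕ := (Finset.Icc 1 n).lcm id

/-- Catalan's constant `G = β(2) = Σ_{l≥0} (-1)^l / (2l+1)²`. -/
def G : ℝ := ∑' l : ℕ, (-1)^l / (2*(l : ℝ)+1)^2

/-- `p(x) = 20x² - 8x + 1` (as a real function). -/
def pR (x : ℝ) : ℝ := 20*x^2 - 8*x + 1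

/-- `q(x) = 3520x⁶ + 5632x⁵ + 2064x⁴ - 384x³ - 156x² + 16x + 7` (as a real function). -/
def qR (x : ℝ) : ℝ := 3520*x^6 + 5632*x^5 + 2064*x^4 - 384*x^3 - 156*x^2 + 16*x + 7

/-- The certificate rational function `s_n(t)` produced by Zeilberger's algorithm. -/
def sFun (n : ℕ) (t : ℝ) : ℝ :=
  (8*(n : ℝ)*(2*(n : ℝ)-1)^2*(20*(n : ℝ)^2+32*(n : ℝ)+13)*t^4
    + 2*(5440*(n : ℝ)^6+7104*(n : ℝ)^5+912*(n : ℝ)^4-1088*(n : ℝ)^3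
        +76*(n : ℝ)^2+68*(n : ℝ)+7)*t^3
    + (44800*(n : ℝ)^7+65600*(n : ℝ)^6+17568*(n : ℝ)^5-7056*(n : ℝ)^4
        -1088*(n : ℝ)^3+372*(n : ℝ)^2+146*(n : ℝ)-1)*t^2
    + (2*(n : ℝ)+1)*(34880*(n : ℝ)^7+39328*(n : ℝ)^6-2176*(n : ℝ)^5-8416*(n : ℝ)^4
        +964*(n : ℝ)^3+154*(n : ℝ)^2+58*(n : ℝ)-13)*t
    + (n : ℝ)*(2*(n : ℝ)-1)*(2*(n : ℝ)+1)^2*(4720*(n : ℝ)^5+6192*(n : ℝ)^4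
        +816*(n : ℝ)^3-864*(n : ℝ)^2+69*(n : ℝ)+13))
  / (2*(2*t+(n : ℝ)+1)*(t+2*(n : ℝ)-1)*(t+2*(n : ℝ)))

/-- `S_n(t) = s_n(t)·R_n(t)`. -/
def S (n : ℕ) (t : ℝ) : ℝ := sFun n t * R n t

private lemma prod_shift_aux (x : ℝ) (m : ℕ) :
    (∏ i ∈ Finset.range m, (x + 1 + (i:ℝ))) * x
      = (∏ i ∈ Finset.range m, (x + (i:ℝ))) * (x + m) := by
  have h1 : (∏ i ∈ Finset.range (m+1), (x + (i:ℝ)))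
      = (∏ i ∈ Finset.range m, (x + 1 + (i:ℝ))) * x := by
    rw [Finset.prod_range_succ']
    congr 1
    · exact Finset.prod_congr rfl fun i _ => by push_cast; ring
    · norm_num
  rw [← h1, Finset.prod_range_succ]

set_option maxHeartbeats 4000000 in
/-- the creative-telescoping identity
`(2n+1)²(2n+2)² p(n) R_{n+1}(t) - q(n) R_n(t) - (2n-1)²(2n)² p(n+1) R_{n-1}(t)
  = -S_n(t+1) - S_n(t)`
for `n ≥ 1` and `t` avoiding all poles involved. -/
theorem creative_telescoping_identity :
    ∀ n : ℕ, 1 ≤ n → ∀ t : ℝ,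
      (∀ k : ℕ, k ≤ n + 1 → t ≠ -(k : ℝ) - 1/2) →
      2*t + (n : ℝ) + 1 ≠ 0 → t + 2*(n : ℝ) - 1 ≠ 0 → t + 2*(n : ℝ) ≠ 0 →
      2*(t+1) + (n : ℝ) + 1 ≠ 0 → (t+1) + 2*(n : ℝ) - 1 ≠ 0 → (t+1) + 2*(n : ℝ) ≠ 0 →
      (2*(n : ℝ)+1)^2 * (2*(n : ℝ)+2)^2 * pR (n : ℝ) * R (n+1) t
          - qR (n : ℝ) * R n t
          - (2*(n : ℝ)-1)^2 * (2*(n : ℝ))^2 * pR ((n : ℝ)+1) * R (n-1) t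
        = -S n (t+1) - S n t := by
  intro n hn t h0 hA hB hC hD hE hF
  obtain ⟨m, rfl⟩ : ∃ m, n = m + 1 := ⟨n - 1, (Nat.succ_pred_eq_of_pos hn).symm⟩
  push_cast at hA hB hC hD hE hF
  have hhalf : ∀ k : ℕ, k ≤ m + 2 → t + (k:ℝ) + 1/2 ≠ 0 := by
    intro k hk h
    exact h0 k (by omega) (by linarith)
  set a := ∏ i ∈ Finset.range m, (t - (i:ℝ)) with ha
  set b := ∏ i ∈ Finset.range m, (t + (m:ℝ) + 3 + (i:ℝ)) with hb
  set d := ∏ k ∈ Finset.range (m+2), (t + (k:ℝ) + 1/2) with hd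
  set f := (Nat.factorial m : ℝ) with hf
  have hd0 : d ≠ 0 := by
    rw [hd]
    exact Finset.prod_ne_zero_iff.2 fun k hk =>
      hhalf k (by have := Finset.mem_range.1 hk; omega)
  have h05 : 2*t + 1 ≠ 0 := by
    have := hhalf 0 (by omega)
    intro h; apply this; push_cast; linarith
  have h32 : 2*t + 2*(m:ℝ) + 3 ≠ 0 := by
    have := hhalf (m+1) (by omega)
    intro h; apply this; push_cast; linarith
  have h52 : 2*t + 2*(m:ℝ) + 5 ≠ 0 := by
    have := hhalf (m+2) (by omega)
    intro h; apply this; push_cast; linarith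
  have hB' : t + 2*(m:ℝ) + 1 ≠ 0 := by intro h; apply hB; push_cast; linarith
  have hC' : t + 2*(m:ℝ) + 2 ≠ 0 := by intro h; apply hC; push_cast; linarith
  have hA' : 2*t + (m:ℝ) + 2 ≠ 0 := by intro h; apply hA; push_cast; linarith
  have hD' : 2*t + (m:ℝ) + 4 ≠ 0 := by intro h; apply hD; push_cast; linarith
  have hF' : t + 2*(m:ℝ) + 3 ≠ 0 := by intro h; apply hF; push_cast; linarith
  -- product identities
  have hP : ∏ i ∈ Finset.range (m+1), (t - (i:ℝ)) = a * (t - m) :=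
    Finset.prod_range_succ _ _
  have hP1 : ∏ i ∈ Finset.range (m+2), (t - (i:ℝ)) = a * (t - m) * (t - m - 1) := by
    rw [Finset.prod_range_succ, hP]; push_cast; ring
  have hPs : ∏ i ∈ Finset.range (m+1), (t + 1 - (i:ℝ)) = a * (t + 1) := by
    rw [Finset.prod_range_succ']
    have hc : (∏ i ∈ Finset.range m, (t + 1 - ((i:ℕ)+1 : ℕ))) = a :=
      Finset.prod_congr rfl fun i _ => by push_cast; ring
    rw [hc]; norm_num
  have hQ : ∏ i ∈ Finset.range (m+1), (t + ((m+1 : ℕ):ℝ) + 1 + (i:ℝ))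
      = b * (t + m + 2) := by
    rw [Finset.prod_range_succ']
    have hc : (∏ i ∈ Finset.range m, (t + ((m+1 : ℕ):ℝ) + 1 + (((i:ℕ)+1 : ℕ):ℝ)))
        = b :=
      Finset.prod_congr rfl fun i _ => by push_cast; ring
    rw [hc]; push_cast; ring
  have hQ1 : ∏ i ∈ Finset.range (m+2), (t + ((m+2 : ℕ):ℝ) + 1 + (i:ℝ))
      = b * (t + 2*m + 3) * (t + 2*m + 4) := by
    rw [Finset.prod_range_succ, Finset.prod_range_succ]
    have hc : (∏ i ∈ Finset.range m, (t + ((m+2 : ℕ):ℝ) + 1 + (i:ℝ))) = b :=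
      Finset.prod_congr rfl fun i _ => by push_cast; ring
    rw [hc]; push_cast; ring
  have hQs : ∏ i ∈ Finset.range (m+1), (t + 1 + ((m+1 : ℕ):ℝ) + 1 + (i:ℝ))
      = b * (t + 2*m + 3) := by
    rw [Finset.prod_range_succ]
    have hc : (∏ i ∈ Finset.range m, (t + 1 + ((m+1 : ℕ):ℝ) + 1 + (i:ℝ))) = b :=
      Finset.prod_congr rfl fun i _ => by push_cast; ring
    rw [hc]; push_cast; ring
  have hQm : ∏ i ∈ Finset.range m, (t + (m:ℝ) + 1 + (i:ℝ))
      = b * (t + m + 1) * (t + m + 2) / ((t + 2*m + 1) * (t + 2*m + 2)) := by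
    have e1 := prod_shift_aux (t + (m:ℝ) + 1) m
    have e2 := prod_shift_aux (t + (m:ℝ) + 2) m
    have c1 : (∏ i ∈ Finset.range m, (t + (m:ℝ) + 1 + 1 + (i:ℝ)))
        = ∏ i ∈ Finset.range m, (t + (m:ℝ) + 2 + (i:ℝ)) :=
      Finset.prod_congr rfl fun i _ => by ring
    have c2 : (∏ i ∈ Finset.range m, (t + (m:ℝ) + 2 + 1 + (i:ℝ))) = b :=
      Finset.prod_congr rfl fun i _ => by ring
    rw [c1] at e1
    rw [c2] at e2
    rw [eq_div_iff (mul_ne_zero hB' hC')]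
    linear_combination (-(t + 2*(m:ℝ) + 2)) * e1 + (-(t + (m:ℝ) + 1)) * e2
  have hDm : ∏ k ∈ Finset.range (m+1), (t + (k:ℝ) + 1/2)
      = 2 * d / (2*t + 2*m + 3) := by
    have e : d = (∏ k ∈ Finset.range (m+1), (t + (k:ℝ) + 1/2)) * (t + ((m+1:ℕ):ℝ) + 1/2) := by
      rw [hd]; exact Finset.prod_range_succ _ _
    rw [eq_div_iff h32, e]; push_cast; ring
  have hD1 : ∏ k ∈ Finset.range (m+3), (t + (k:ℝ) + 1/2)
      = d * (2*t + 2*m + 5) / 2 := by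
    rw [show m + 3 = (m+2) + 1 from rfl, Finset.prod_range_succ, ← hd]
    push_cast; ring
  have hDs : ∏ k ∈ Finset.range (m+2), (t + 1 + (k:ℝ) + 1/2)
      = d * (2*t + 2*m + 5) / (2*t + 1) := by
    have e := prod_shift_aux (t + 1/2) (m+2)
    have c1 : (∏ i ∈ Finset.range (m+2), (t + 1/2 + 1 + (i:ℝ)))
        = ∏ k ∈ Finset.range (m+2), (t + 1 + (k:ℝ) + 1/2) :=
      Finset.prod_congr rfl fun i _ => by ring
    have c2 : (∏ i ∈ Finset.range (m+2), (t + 1/2 + (i:ℝ))) = d := by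
      rw [hd]; exact Finset.prod_congr rfl fun i _ => by ring
    rw [c1, c2] at e
    rw [eq_div_iff h05]
    push_cast at e
    linear_combination 2 * e
  have hf1 : (Nat.factorial (m+1) : ℝ) = ((m:ℝ)+1) * f := by
    rw [hf]; push_cast [Nat.factorial_succ]; ring
  have hf2 : (Nat.factorial (m+2) : ℝ) = ((m:ℝ)+2) * (((m:ℝ)+1) * f) := by
    rw [hf]; push_cast [Nat.factorial_succ]; ring
  simp only [show m+1+1 = m+2 from rfl, show m+2+1 = m+3 from rfl,
    Nat.add_sub_cancel, R, S, sFun, pR, qR]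
  rw [hP, hP1, hPs, hQ, hQ1, hQs, hQm, hDm, hD1, hDs, hf1, hf2]
  rw [← ha, ← hd, ← hf]
  clear ha hb hd hf h0 hhalf
  clear_value a b d f
  push_cast
  have hM : d * (2*t+2*(m:ℝ)+5) ≠ 0 := mul_ne_zero hd0 h52
  have hM2 : d * (2*t+2*(m:ℝ)+5) / 2 ≠ 0 := div_ne_zero hM two_ne_zero
  have hM3 : d * (2*t+2*(m:ℝ)+5) / (2*t+1) ≠ 0 := div_ne_zero hM h05
  have hM4 : 2 * d / (2*t+2*(m:ℝ)+3) ≠ 0 :=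
    div_ne_zero (mul_ne_zero two_ne_zero hd0) h32
  push_cast
  have h52' : 2 * (t + (m:ℝ)) + 5 ≠ 0 := by intro h; apply h52; linarith
  field_simp
  ring
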